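/- Let K ∈ C^n be a nondegenerate convex body (not a single point), C a gauge, and K* a completion of K with respect to the diameter D_m. Then K is optimally contained in K*, i.e., K ⊂ K* and R(K, K*) = 1. -/

import Mathlib

open Pointwise Set

variable {V : Type*} [NormedAddCommGroup V] [NormedSpace ℝ V]

/-- Circumradius `R(K,C) = inf {ρ ≥ 0 : ∃ t, K ⊆ t + ρC}`. -/
noncomputable def circumradius (K C : Set V) : ℝ :=
  sInf {ρ : ℝ | 0 ≤ ρ ∧ ∃ t : V, K ⊆ t +ᵥ ρ • C}

/-- Inradius `r(K,C) = sup {ρ ≥ 0 : ∃ t, t + ρC ⊆ K}`. -/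
noncomputable def inradius (K C : Set V) : ℝ :=
  sSup {ρ : ℝ | 0 ≤ ρ ∧ ∃ t : V, t +ᵥ ρ • C ⊆ K}

/-- Optimal containment: `K ⊆ C` and `R(K,C) = 1`. -/
def OptCont (K C : Set V) : Prop := K ⊆ C ∧ circumradius K C = 1

/-- Minkowski asymmetry `s(C) = R(C, -C)`. -/
noncomputable def minkAsym (C : Set V) : ℝ := circumradius C (-C)

/-- `C` is Minkowski-centered if `C ⊆opt s(C) • (-C)`. -/
def MinkowskiCentered (C : Set V) : Prop := OptCont C (minkAsym C • (-C))

/-- Arithmetic symmetrization `(K - K)/2`. -/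
def symAM (K : Set V) : Set V := (2 : ℝ)⁻¹ • (K - K)

/-- Maximum symmetrization `conv (C ∪ -C)`. -/
def symMAX (C : Set V) : Set V := convexHull ℝ (C ∪ -C)

/-- Minimum symmetrization `C ∩ -C`. -/
def symMIN (C : Set V) : Set V := C ∩ -C

/-- The maximum diameter `D_MAX(K,C) = 2 R((K-K)/2, conv(C ∪ -C))`. -/
noncomputable def DMAX (K C : Set V) : ℝ := 2 * circumradius (symAM K) (symMAX C)

/-- The minimum diameter `D_MIN(K,C) = 2 R((K-K)/2, C ∩ -C)`. -/
noncomputable def DMIN (K C : Set V) : ℝ := 2 * circumradius (symAM K) (symMIN C)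

/-- A body is complete (w.r.t. a diameter functional `D`) if every strictly larger
convex body has strictly larger diameter. -/
def IsCompleteBody (D : Set V → ℝ) (K : Set V) : Prop :=
  ∀ K' : Set V, Convex ℝ K' → IsCompact K' → K ⊂ K' → D K < D K'

/-- `Kstar` is a completion of `K` w.r.t. the diameter functional `D`. -/
def IsCompletion (D : Set V → ℝ) (K Kstar : Set V) : Prop :=
  K ⊆ Kstar ∧ Convex ℝ Kstar ∧ IsCompact Kstar ∧ IsCompleteBody D Kstar ∧ D Kstar = D K

/-- Polar set `C° = {a : ∀ x ∈ C, ⟪a,x⟫ ≤ 1}`. -/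
def polarSet {n : ℕ} (C : Set (EuclideanSpace ℝ (Fin n))) : Set (EuclideanSpace ℝ (Fin n)) :=
  {a | ∀ x ∈ C, (inner ℝ a x : ℝ) ≤ 1}

/-- Harmonic symmetrization `C_HM = ((C° - C°)/2)°`. -/
def symHM {n : ℕ} (C : Set (EuclideanSpace ℝ (Fin n))) : Set (EuclideanSpace ℝ (Fin n)) :=
  polarSet ((2 : ℝ)⁻¹ • (polarSet C - polarSet C))

/-- The harmonic diameter `D_HM(K,C) = 2 R((K-K)/2, C_HM)`. -/
noncomputable def DHM {n : ℕ} (K C : Set (EuclideanSpace ℝ (Fin n))) : ℝ :=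
  2 * circumradius (symAM K) (symHM C)

/-- Support function `h_C(s) = sup_{x ∈ C} ⟪s, x⟫`. -/
noncomputable def supportFn {n : ℕ} (C : Set (EuclideanSpace ℝ (Fin n)))
    (s : EuclideanSpace ℝ (Fin n)) : ℝ :=
  sSup ((fun x => (inner ℝ s x : ℝ)) '' C)

lemma symAM_subset_ball' {M : ℝ} {K : Set V} (h : K ⊆ Metric.closedBall 0 M) :
    symAM K ⊆ Metric.closedBall 0 M := by
  rintro z hz
  obtain ⟨w, hw, rfl⟩ := hz
  obtain ⟨a, ha, b, hb, rfl⟩ := hw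
  have ha' := h ha; have hb' := h hb
  simp only [Metric.mem_closedBall, dist_zero_right] at *
  rw [norm_smul]
  have : ‖a - b‖ ≤ 2 * M := by
    calc ‖a - b‖ ≤ ‖a‖ + ‖b‖ := norm_sub_le a b
    _ ≤ 2 * M := by linarith
  rw [norm_inv]
  simp only [RCLike.norm_ofNat]
  nlinarith [norm_nonneg (a - b)]

lemma ball_subset_symAM' {r : ℝ} {K : Set V} (h : Metric.closedBall 0 r ⊆ K) (h0 : (0:V) ∈ K) :
    Metric.closedBall 0 (r/2) ⊆ symAM K := by
  intro z hz
  simp only [Metric.mem_closedBall, dist_zero_right] at hz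
  refine ⟨(2:ℝ) • z, ⟨(2:ℝ) • z, h ?_, 0, h0, by simp⟩, by simp [smul_smul]⟩
  simp only [Metric.mem_closedBall, dist_zero_right, norm_smul]
  simp only [RCLike.norm_ofNat]
  linarith

lemma polar_subset_ball' {n : ℕ} {A : Set (EuclideanSpace ℝ (Fin n))} {r : ℝ} (hr : 0 < r)
    (hA : Metric.closedBall 0 r ⊆ A) : polarSet A ⊆ Metric.closedBall 0 r⁻¹ := by
  intro a ha
  simp only [Metric.mem_closedBall, dist_zero_right]
  by_cases h : a = 0
  · simp [h]; positivity
  · have hna : 0 < ‖a‖ := norm_pos_iff.2 h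
    have hx : (r / ‖a‖) • a ∈ A := by
      apply hA
      simp only [Metric.mem_closedBall, dist_zero_right, norm_smul, Real.norm_eq_abs,
        abs_of_pos (div_pos hr hna)]
      rw [div_mul_cancel₀ _ hna.ne']
    have h1 := ha _ hx
    rw [real_inner_smul_right, real_inner_self_eq_norm_sq] at h1
    have h2 : r * ‖a‖ ≤ 1 := by
      have : r / ‖a‖ * ‖a‖ ^ 2 = r * ‖a‖ := by field_simp
      linarith [this ▸ h1]
    rw [← one_div, le_div_iff₀ hr]
    linarith [mul_comm r ‖a‖]

lemma ball_subset_polar' {n : ℕ} {A : Set (EuclideanSpace ℝ (Fin n))} {r : ℝ} (hr : 0 < r)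
    (hA : A ⊆ Metric.closedBall 0 r) : Metric.closedBall 0 r⁻¹ ⊆ polarSet A := by
  intro a ha x hx
  simp only [Metric.mem_closedBall, dist_zero_right] at ha
  have hxn := hA hx
  simp only [Metric.mem_closedBall, dist_zero_right] at hxn
  calc (inner ℝ a x : ℝ) ≤ ‖a‖ * ‖x‖ := real_inner_le_norm a x
  _ ≤ r⁻¹ * r := mul_le_mul ha hxn (norm_nonneg x) (by positivity)
  _ = 1 := inv_mul_cancel₀ hr.ne'

/-- If `Kstar` is a completion of a nondegenerate convex body `K` with respect to any of the
four diameters `D_m` (for the gauge `C`), then `K` is optimally contained in `Kstar`. -/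
theorem completion_optimal_containment {n : ℕ} (K Kstar C : Set (EuclideanSpace ℝ (Fin n)))
    (hKconv : Convex ℝ K) (hKcomp : IsCompact K) (hKne : K.Nonempty)
    (hKnd : ¬ ∃ p : EuclideanSpace ℝ (Fin n), K = {p})
    (hCconv : Convex ℝ C) (hCcomp : IsCompact C) (h0 : 0 ∈ interior C)
    (Cm : Set (EuclideanSpace ℝ (Fin n)))
    (hCm : Cm = symMIN C ∨ Cm = symHM C ∨ Cm = symAM C ∨ Cm = symMAX C)
    (hcompl : IsCompletion (fun K' => 2 * circumradius (symAM K') Cm) K Kstar) :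
    OptCont K Kstar := by
  classical
  obtain ⟨hsub, hKsconv, hKscomp, _hKscomplete, hDeq⟩ := hcompl
  simp only at hDeq
  have hceq : circumradius (symAM Kstar) Cm = circumradius (symAM K) Cm := by linarith
  -- Step 0: bounds on C
  obtain ⟨ε₁, hε₁, hball₁⟩ := Metric.mem_nhds_iff.1 (mem_interior_iff_mem_nhds.1 h0)
  set ε : ℝ := ε₁ / 2 with hεdef
  have hε : 0 < ε := by positivity
  have hballC : Metric.closedBall 0 ε ⊆ C :=
    (Metric.closedBall_subset_ball (by linarith)).trans hball₁
  obtain ⟨M₁, hM₁⟩ := hCcomp.isBounded.subset_closedBall 0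
  set M : ℝ := max M₁ 1 with hMdef
  have hM : 0 < M := lt_of_lt_of_le one_pos (le_max_right _ _)
  have hCM : C ⊆ Metric.closedBall 0 M :=
    hM₁.trans (Metric.closedBall_subset_closedBall (le_max_left _ _))
  have h0C : (0:EuclideanSpace ℝ (Fin n)) ∈ C := interior_subset h0
  -- Step 1: ∃ ε' M', ball ⊆ Cm ⊆ ball
  obtain ⟨e, m, he, hm, hin, hout⟩ :
      ∃ e m : ℝ, 0 < e ∧ 0 < m ∧ Metric.closedBall 0 e ⊆ Cm ∧ Cm ⊆ Metric.closedBall 0 m := by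
    rcases hCm with rfl | rfl | rfl | rfl
    · -- symMIN
      refine ⟨ε, M, hε, hM, ?_, fun x hx => hCM hx.1⟩
      intro x hx
      simp only [Metric.mem_closedBall, dist_zero_right] at hx
      refine ⟨hballC (by simpa [Metric.mem_closedBall, dist_zero_right]), ?_⟩
      simp only [Set.mem_neg]
      exact hballC (by simpa [Metric.mem_closedBall, dist_zero_right])
    · -- symHM
      have hpolar_out : polarSet C ⊆ Metric.closedBall 0 ε⁻¹ := polar_subset_ball' hε hballC
      have hpolar_in : Metric.closedBall 0 M⁻¹ ⊆ polarSet C := ball_subset_polar' hM hCM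
      have h0p : (0:EuclideanSpace ℝ (Fin n)) ∈ polarSet C := by intro x hx; simp
      have hD_out : (2:ℝ)⁻¹ • (polarSet C - polarSet C) ⊆ Metric.closedBall 0 ε⁻¹ :=
        symAM_subset_ball' hpolar_out
      have hD_in : Metric.closedBall 0 (M⁻¹/2) ⊆ (2:ℝ)⁻¹ • (polarSet C - polarSet C) :=
        ball_subset_symAM' hpolar_in h0p
      refine ⟨(ε⁻¹)⁻¹, (M⁻¹/2)⁻¹, by positivity, by positivity, ?_, ?_⟩
      · exact ball_subset_polar' (by positivity) hD_out
      · exact polar_subset_ball' (by positivity) hD_in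
    · -- symAM
      exact ⟨ε/2, M, by positivity, hM, ball_subset_symAM' hballC h0C, symAM_subset_ball' hCM⟩
    · -- symMAX
      refine ⟨ε, M, hε, hM, fun x hx => subset_convexHull ℝ (C ∪ -C) (Or.inl (hballC hx)), ?_⟩
      apply convexHull_min _ (convex_closedBall 0 M)
      rintro x (hx | hx)
      · exact hCM hx
      · simp only [Set.mem_neg] at hx
        have := hCM hx
        simp only [Metric.mem_closedBall, dist_zero_right] at *
        simpa using this
  -- Step 2: nondegeneracy gives x ≠ 0 with ±x ∈ symAM K
  push_neg at hKnd
  obtain ⟨p, hp⟩ := hKne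
  obtain ⟨q, hq, hpq⟩ : ∃ q ∈ K, q ≠ p := by
    by_contra h
    push_neg at h
    exact hKnd p (Set.eq_singleton_iff_unique_mem.2 ⟨hp, h⟩)
  set x : EuclideanSpace ℝ (Fin n) := (2:ℝ)⁻¹ • (q - p) with hxdef
  have hxne : x ≠ 0 := by
    rw [hxdef]
    simp only [Ne, smul_eq_zero, sub_eq_zero]
    rintro (h | h)
    · norm_num at h
    · exact hpq h
  have hxmem : x ∈ symAM K := ⟨q - p, ⟨q, hq, p, hp, rfl⟩, rfl⟩
  have hxmem' : -x ∈ symAM K := ⟨p - q, ⟨p, hp, q, hq, rfl⟩, by simp [hxdef]; module⟩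
  -- sets
  set S : Set ℝ := {ρ : ℝ | 0 ≤ ρ ∧ ∃ t : EuclideanSpace ℝ (Fin n), symAM K ⊆ t +ᵥ ρ • Cm} with hSdef
  set S' : Set ℝ := {ρ : ℝ | 0 ≤ ρ ∧ ∃ t : EuclideanSpace ℝ (Fin n), symAM Kstar ⊆ t +ᵥ ρ • Cm} with hS'def
  have hSbdd : BddBelow S := ⟨0, fun ρ hρ => hρ.1⟩
  have hS'bdd : BddBelow S' := ⟨0, fun ρ hρ => hρ.1⟩
  -- S' nonempty
  have hKsne : Kstar.Nonempty := ⟨p, hsub hp⟩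
  obtain ⟨B₁, hB₁⟩ := hKscomp.isBounded.subset_closedBall 0
  set B : ℝ := max B₁ 1 with hBdef
  have hB : 0 < B := lt_of_lt_of_le one_pos (le_max_right _ _)
  have hKsB : Kstar ⊆ Metric.closedBall 0 B :=
    hB₁.trans (Metric.closedBall_subset_closedBall (le_max_left _ _))
  have hS'ne : S'.Nonempty := by
    refine ⟨B / e, ⟨by positivity, 0, ?_⟩⟩
    intro z hz
    have hzB : ‖z‖ ≤ B := by
      have := symAM_subset_ball' hKsB hz
      simpa [Metric.mem_closedBall, dist_zero_right] using this
    have h1 : (B/e) * (e/B) = 1 := by field_simp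
    refine ⟨(B/e) • ((e/B) • z), Set.smul_mem_smul_set (hin ?_), ?_⟩
    swap
    · show (0:EuclideanSpace ℝ (Fin n)) + (B/e) • ((e/B) • z) = z
      rw [smul_smul, h1, one_smul, zero_add]
    simp only [Metric.mem_closedBall, dist_zero_right, norm_smul, Real.norm_eq_abs,
      abs_of_pos (div_pos he hB)]
    rw [div_mul_eq_mul_div, div_le_iff₀ hB]
    nlinarith
  have hSne : S.Nonempty := by
    obtain ⟨σ, hσ0, t, ht⟩ := hS'ne
    refine ⟨σ, hσ0, t, ?_⟩
    intro z hz
    apply ht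
    obtain ⟨w, hw, rfl⟩ := hz
    obtain ⟨a, ha, b, hb, rfl⟩ := hw
    exact ⟨a - b, ⟨a, hsub ha, b, hsub hb, rfl⟩, rfl⟩
  -- symAM K ⊆ symAM Kstar, so cK ≤ cKs = cK; also cK > 0
  have hcK_pos : 0 < circumradius (symAM K) Cm := by
    have hlb : ∀ ρ ∈ S, ‖x‖ / m ≤ ρ := by
      rintro ρ ⟨hρ0, t, ht⟩
      obtain ⟨c₁, hc₁, hc₁e⟩ := ht hxmem
      obtain ⟨c₂, hc₂, hc₂e⟩ := ht hxmem'
      obtain ⟨d₁, hd₁, rfl⟩ := hc₁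
      obtain ⟨d₂, hd₂, rfl⟩ := hc₂
      have e1 : t + ρ • d₁ = x := hc₁e
      have e2 : t + ρ • d₂ = -x := hc₂e
      have h2x : (2:ℝ) • x = ρ • (d₁ - d₂) := by
        have h3 : x - (-x) = (t + ρ • d₁) - (t + ρ • d₂) := by rw [e1, e2]
        rw [sub_neg_eq_add, ← two_smul ℝ] at h3
        rw [h3]; module
      have hnorm : 2 * ‖x‖ = ρ * ‖d₁ - d₂‖ := by
        have := congrArg norm h2x
        simpa [norm_smul, abs_of_nonneg hρ0] using this
      have hd : ‖d₁ - d₂‖ ≤ 2 * m := by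
        have h1 := hout hd₁; have h2 := hout hd₂
        simp only [Metric.mem_closedBall, dist_zero_right] at h1 h2
        calc ‖d₁ - d₂‖ ≤ ‖d₁‖ + ‖d₂‖ := norm_sub_le _ _
        _ ≤ 2 * m := by linarith
      rw [div_le_iff₀ hm]
      nlinarith [norm_nonneg (d₁ - d₂)]
    have : ‖x‖ / m ≤ circumradius (symAM K) Cm := le_csInf hSne hlb
    have hx0 : 0 < ‖x‖ := norm_pos_iff.2 hxne
    linarith [div_pos hx0 hm]
  -- OptCont
  constructor
  · exact hsub
  · apply le_antisymm
    · apply csInf_le ⟨0, fun ρ hρ => hρ.1⟩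
      exact ⟨zero_le_one, 0, by simpa using hsub⟩
    · apply le_csInf
      · exact ⟨1, zero_le_one, 0, by simpa using hsub⟩
      rintro ρ ⟨hρ0, t, ht⟩
      by_contra hlt
      push_neg at hlt
      rcases eq_or_lt_of_le hρ0 with rfl | hρpos
      · -- ρ = 0
        have : K ⊆ {t} := by
          intro z hz
          have := ht hz
          rw [zero_smul_set hKsne] at this
          obtain ⟨w, hw, rfl⟩ := this
          simp only [Set.mem_zero] at hw
          show t + w ∈ ({t} : Set _)
          rw [hw, add_zero]
          rfl
        have hpt : p = t := this hp
        have hqt : q = t := this hq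
        exact hpq (hqt.trans hpt.symm)
      · -- 0 < ρ < 1
        have key : ∀ σ ∈ S', circumradius (symAM K) Cm ≤ ρ * σ := by
          rintro σ ⟨hσ0, s, hs⟩
          apply csInf_le hSbdd
          refine ⟨mul_nonneg hρ0 hσ0, ρ • s, ?_⟩
          intro z hz
          obtain ⟨w, hw, rfl⟩ := hz
          obtain ⟨a, ha, b, hb, rfl⟩ := hw
          obtain ⟨a', ha', hae⟩ := ht ha
          obtain ⟨b', hb', hbe⟩ := ht hb
          obtain ⟨a'', ha'', rfl⟩ := ha'
          obtain ⟨b'', hb'', rfl⟩ := hb'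
          have hw' : (2:ℝ)⁻¹ • (a'' - b'') ∈ symAM Kstar :=
            ⟨a'' - b'', ⟨a'', ha'', b'', hb'', rfl⟩, rfl⟩
          obtain ⟨c, hc, hce⟩ := hs hw'
          obtain ⟨c', hc', rfl⟩ := hc
          refine ⟨(ρ * σ) • c', Set.smul_mem_smul_set hc', ?_⟩
          have e1 : t + ρ • a'' = a := hae
          have e2 : t + ρ • b'' = b := hbe
          have e3 : s + σ • c' = (2:ℝ)⁻¹ • (a'' - b'') := hce
          have hab : a - b = ρ • (a'' - b'') := by
            rw [← e1, ← e2]; module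
          show ρ • s + (ρ * σ) • c' = (2:ℝ)⁻¹ • (a - b)
          rw [hab, smul_comm ((2:ℝ)⁻¹) ρ (a'' - b''), ← e3]
          module
        have h1 : circumradius (symAM K) Cm / ρ ≤ circumradius (symAM Kstar) Cm := by
          apply le_csInf hS'ne
          intro σ hσ
          rw [div_le_iff₀ hρpos]
          linarith [key σ hσ, mul_comm ρ σ]
        rw [hceq] at h1
        rw [div_le_iff₀ hρpos] at h1
        nlinarith
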